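/- If R = [[D, C],[B, A]] is a unitary (p+n)×(p+n) matrix and |z| > 1 (with zI_n - A necessarily invertible since all eigenvalues of A lie in the closed unit disk), then G(z) = D + C(zI_n - A)^{-1}B satisfies G(z)G(z)* ≤ I_p (i.e., I_p - G(z)G(z)* is positive semidefinite). -/

import Mathlib

open Matrix
open scoped ComplexOrder

theorem transfer_function_contractive_outside {p n : ℕ}
    (D : Matrix (Fin p) (Fin p) ℂ) (C : Matrix (Fin p) (Fin n) ℂ)
    (B : Matrix (Fin n) (Fin p) ℂ) (A : Matrix (Fin n) (Fin n) ℂ)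
    (hR : Matrix.fromBlocks D C B A ∈ Matrix.unitaryGroup (Fin p ⊕ Fin n) ℂ)
    (z : ℂ) (hz : 1 < ‖z‖) :
    IsUnit (z • (1 : Matrix (Fin n) (Fin n) ℂ) - A) ∧
    ((1 : Matrix (Fin p) (Fin p) ℂ) -
        (D + C * (z • (1 : Matrix (Fin n) (Fin n) ℂ) - A)⁻¹ * B) *
        (D + C * (z • (1 : Matrix (Fin n) (Fin n) ℂ) - A)⁻¹ * B)ᴴ).PosSemidef := by
  -- block relations
  have h1 : Matrix.fromBlocks (D * Dᴴ + C * Cᴴ) (D * Bᴴ + C * Aᴴ)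
      (B * Dᴴ + A * Cᴴ) (B * Bᴴ + A * Aᴴ)
      = Matrix.fromBlocks 1 0 0 1 := by
    rw [← fromBlocks_multiply, ← fromBlocks_conjTranspose, fromBlocks_one,
      ← Matrix.star_eq_conjTranspose]
    exact Matrix.mem_unitaryGroup_iff.mp hR
  have h2 : Matrix.fromBlocks (Dᴴ * D + Bᴴ * B) (Dᴴ * C + Bᴴ * A)
      (Cᴴ * D + Aᴴ * B) (Cᴴ * C + Aᴴ * A)
      = Matrix.fromBlocks 1 0 0 1 := by
    rw [← fromBlocks_multiply, ← fromBlocks_conjTranspose, fromBlocks_one,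
      ← Matrix.star_eq_conjTranspose]
    exact Matrix.mem_unitaryGroup_iff'.mp hR
  have hDD : D * Dᴴ + C * Cᴴ = 1 := by
    have := congrArg Matrix.toBlocks₁₁ h1
    simp only [Matrix.toBlocks_fromBlocks₁₁] at this; exact this
  have hDB : D * Bᴴ + C * Aᴴ = 0 := by
    have := congrArg Matrix.toBlocks₁₂ h1
    simp only [Matrix.toBlocks_fromBlocks₁₂] at this; exact this
  have hBD : B * Dᴴ + A * Cᴴ = 0 := by
    have := congrArg Matrix.toBlocks₂₁ h1
    simp only [Matrix.toBlocks_fromBlocks₂₁] at this; exact this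
  have hBB : B * Bᴴ + A * Aᴴ = 1 := by
    have := congrArg Matrix.toBlocks₂₂ h1
    simp only [Matrix.toBlocks_fromBlocks₂₂] at this; exact this
  have hcol : Cᴴ * C + Aᴴ * A = 1 := by
    have := congrArg Matrix.toBlocks₂₂ h2
    simp only [Matrix.toBlocks_fromBlocks₂₂] at this; exact this
  set M : Matrix (Fin n) (Fin n) ℂ := z • (1 : Matrix (Fin n) (Fin n) ℂ) - A with hM
  -- invertibility
  have hu : IsUnit M := by
    by_contra h
    rw [Matrix.isUnit_iff_isUnit_det, isUnit_iff_ne_zero, not_not] at h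
    obtain ⟨v, hv, hMv⟩ := (Matrix.exists_mulVec_eq_zero_iff).mpr h
    have hAv : A *ᵥ v = z • v := by
      have : (z • (1 : Matrix (Fin n) (Fin n) ℂ)) *ᵥ v - A *ᵥ v = 0 := by
        rw [← Matrix.sub_mulVec]; exact hMv
      have h2 : z • v - A *ᵥ v = 0 := by
        simpa [Matrix.smul_mulVec, Matrix.one_mulVec] using this
      exact (sub_eq_zero.mp h2).symm
    -- quadratic form computation
    set s : ℂ := star v ⬝ᵥ v with hs
    have hspos : 0 < s := Matrix.dotProduct_star_self_pos_iff.mpr hv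
    have hsum : star v ⬝ᵥ ((Cᴴ * C + Aᴴ * A) *ᵥ v) = s := by
      rw [hcol, Matrix.one_mulVec]
    have hC : star v ⬝ᵥ ((Cᴴ * C) *ᵥ v) = star (C *ᵥ v) ⬝ᵥ (C *ᵥ v) := by
      rw [← Matrix.mulVec_mulVec, Matrix.dotProduct_mulVec, Matrix.star_mulVec]
    have hA : star v ⬝ᵥ ((Aᴴ * A) *ᵥ v) = (starRingEnd ℂ z * z) * s := by
      rw [← Matrix.mulVec_mulVec, Matrix.dotProduct_mulVec, ← Matrix.star_mulVec, hAv,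
        star_smul, smul_dotProduct, dotProduct_smul, smul_eq_mul, smul_eq_mul, hs,
        show star z = (starRingEnd ℂ) z from rfl]
      ring
    have hCnn : 0 ≤ star (C *ᵥ v) ⬝ᵥ (C *ᵥ v) := dotProduct_star_self_nonneg _
    have heq : star (C *ᵥ v) ⬝ᵥ (C *ᵥ v) + (starRingEnd ℂ z * z) * s = s := by
      rw [← hC, ← hA, ← dotProduct_add, ← Matrix.add_mulVec]
      exact hsum
    have hzz : (1 : ℂ) < starRingEnd ℂ z * z := by
      have : starRingEnd ℂ z * z = ((‖z‖ ^ 2 : ℝ) : ℂ) := by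
        rw [mul_comm, Complex.mul_conj, Complex.normSq_eq_norm_sq]
      rw [this]
      have h1 : (1:ℝ) < ‖z‖ ^ 2 := by nlinarith
      exact_mod_cast Complex.real_lt_real.mpr h1
    have hlt : s < starRingEnd ℂ z * z * s := by
      calc s = 1 * s := (one_mul s).symm
      _ < starRingEnd ℂ z * z * s := mul_lt_mul_of_pos_right hzz hspos
    have : starRingEnd ℂ z * z * s ≤ s := by
      calc starRingEnd ℂ z * z * s ≤ star (C *ᵥ v) ⬝ᵥ (C *ᵥ v) + starRingEnd ℂ z * z * s :=
        le_add_of_nonneg_left hCnn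
      _ = s := heq
    exact absurd this hlt.not_ge
  refine ⟨hu, ?_⟩
  have hdet : IsUnit M.det := (Matrix.isUnit_iff_isUnit_det M).mp hu
  set F : Matrix (Fin n) (Fin n) ℂ := M⁻¹ with hF
  have hFM : F * M = 1 := Matrix.nonsing_inv_mul M hdet
  have hkey : (1 : Matrix (Fin n) (Fin n) ℂ) + F * A = z • F := by
    have h' : z • F - F * A = 1 := by
      have := hFM
      rw [hM, Matrix.mul_sub, mul_smul_comm, Matrix.mul_one] at this
      exact this
    rw [← h', sub_add_cancel]
  have e1 : D * Dᴴ = 1 - C * Cᴴ := eq_sub_of_add_eq hDD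
  have e2 : D * Bᴴ = -(C * Aᴴ) := eq_neg_of_add_eq_zero_left hDB
  have e3 : B * Dᴴ = -(A * Cᴴ) := eq_neg_of_add_eq_zero_left hBD
  have e4 : B * Bᴴ = 1 - A * Aᴴ := eq_sub_of_add_eq hBB
  have expand : (D + C * F * B) * (D + C * F * B)ᴴ
      = D * Dᴴ + (D * Bᴴ) * (Fᴴ * Cᴴ) + C * F * (B * Dᴴ) + (C * F) * (B * Bᴴ) * (Fᴴ * Cᴴ) := by
    simp only [conjTranspose_add, conjTranspose_mul, Matrix.mul_add, Matrix.add_mul,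
      Matrix.mul_sub, Matrix.sub_mul, Matrix.mul_one, Matrix.one_mul, Matrix.neg_mul,
      Matrix.mul_neg, neg_neg, Matrix.mul_assoc]
    abel
  have main : (1 : Matrix (Fin p) (Fin p) ℂ) - (D + C * F * B) * (D + C * F * B)ᴴ
      = C * ((1 + F * A) * (1 + F * A)ᴴ - F * Fᴴ) * Cᴴ := by
    rw [expand, e1, e2, e3, e4]
    simp only [conjTranspose_add, conjTranspose_mul, conjTranspose_one, Matrix.mul_add,
      Matrix.add_mul, Matrix.mul_sub, Matrix.sub_mul, Matrix.mul_one, Matrix.one_mul,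
      Matrix.neg_mul, Matrix.mul_neg, neg_neg, Matrix.mul_assoc]
    abel
  have hzz : starRingEnd ℂ z * z = ((‖z‖ ^ 2 : ℝ) : ℂ) := by
    rw [mul_comm, Complex.mul_conj, Complex.normSq_eq_norm_sq]
  set r : ℝ := Real.sqrt (‖z‖ ^ 2 - 1) with hr
  have hr2 : star (r : ℂ) * (r : ℂ) = starRingEnd ℂ z * z - 1 := by
    rw [hzz]
    have : star (r : ℂ) = (r : ℂ) := by
      simp [Complex.star_def, Complex.conj_ofReal]
    rw [this, ← Complex.ofReal_mul, hr,
      Real.mul_self_sqrt (by nlinarith : (0:ℝ) ≤ ‖z‖ ^ 2 - 1)]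
    push_cast
    ring
  have final : (1 : Matrix (Fin p) (Fin p) ℂ) - (D + C * F * B) * (D + C * F * B)ᴴ
      = ((r : ℂ) • (C * F)) * ((r : ℂ) • (C * F))ᴴ := by
    rw [main, hkey]
    simp only [conjTranspose_smul, conjTranspose_mul, Matrix.smul_mul, Matrix.mul_smul,
      smul_smul, Matrix.mul_sub, Matrix.sub_mul, Matrix.mul_assoc,
      show star z = starRingEnd ℂ z from rfl]
    rw [hr2, sub_smul, one_smul]
  rw [final]
  exact Matrix.posSemidef_self_mul_conjTranspose _
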